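/- Let V be a nonzero finite-dimensional complex vector space, G a group, and ρ : G → GL(V) an irreducible linear representation (the only subspaces of V invariant under every ρ(g) are 0 and V). Suppose B is a Hermitian sesquilinear form on V (B(x,y) = conj(B(y,x))) which is invariant under ρ (B(ρ(g)x, ρ(g)y) = B(x,y) for all g ∈ G, x,y ∈ V) and indefinite, i.e. there exist vectors v, w ∈ V with B(v,v) > 0 and B(w,w) < 0 (these values are real since B is Hermitian). Then the image ρ(G) ⊆ GL(V) is infinite; in particular G is an infinite group. -/

import Mathlib

/-- **Coxeter's lemma.** If a group `G` has an irreducible finite-dimensional complex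
representation `ρ` preserving an indefinite Hermitian sesquilinear form, then the image
`ρ(G)` is infinite; in particular `G` is infinite. -/
theorem coxeter_indefinite_hermitian_infinite
    {V : Type*} [AddCommGroup V] [Module ℂ V] [FiniteDimensional ℂ V] [Nontrivial V]
    {G : Type*} [Group G] (ρ : G →* (V ≃ₗ[ℂ] V))
    (hirr : ∀ W : Submodule ℂ V, (∀ (g : G), ∀ x ∈ W, ρ g x ∈ W) → W = ⊥ ∨ W = ⊤)
    (B : V → V → ℂ)
    (haddl : ∀ x y z : V, B x (y + z) = B x y + B x z)
    (hsmul : ∀ (c : ℂ) (x y : V), B x (c • y) = c * B x y)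
    (hherm : ∀ x y : V, B x y = starRingEnd ℂ (B y x))
    (hinv : ∀ (g : G) (x y : V), B (ρ g x) (ρ g y) = B x y)
    (hindef : ∃ v w : V, 0 < (B v v).re ∧ (B w w).re < 0) :
    (Set.range ρ).Infinite ∧ Infinite G := by
  have key : (Set.range ρ).Infinite := by
    intro hfin
    classical
    obtain ⟨v, w, hv, hw⟩ := hindef
    set b := Module.finBasis ℂ V with hb
    set F := hfin.toFinset with hF
    have hmemF : ∀ A : V ≃ₗ[ℂ] V, A ∈ F ↔ ∃ g, ρ g = A := by
      intro A; simp [hF, Set.Finite.mem_toFinset]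
    have h1F : (1 : V ≃ₗ[ℂ] V) ∈ F := (hmemF 1).2 ⟨1, map_one ρ⟩
    let ip : V → V → ℂ := fun x y =>
      ∑ A ∈ F, ∑ i, (starRingEnd ℂ) (b.repr (A x) i) * (b.repr (A y) i)
    have hip_conj : ∀ x y, (starRingEnd ℂ) (ip y x) = ip x y := by
      intro x y
      simp only [ip, map_sum, map_mul, Complex.conj_conj]
      exact Finset.sum_congr rfl fun A _ => Finset.sum_congr rfl fun i _ => mul_comm _ _
    have hterm_re : ∀ a : ℂ, ((starRingEnd ℂ) a * a).re = a.re ^ 2 + a.im ^ 2 := by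
      intro a
      simp [Complex.mul_re]
      ring
    have hip_re : ∀ x, (ip x x).re
        = ∑ A ∈ F, ∑ i, ((b.repr (A x) i).re ^ 2 + (b.repr (A x) i).im ^ 2) := by
      intro x
      simp only [ip, Complex.re_sum]
      exact Finset.sum_congr rfl fun A _ => Finset.sum_congr rfl fun i _ => hterm_re _
    have hip_nonneg : ∀ x, 0 ≤ (ip x x).re := by
      intro x
      rw [hip_re]
      refine Finset.sum_nonneg fun A _ => Finset.sum_nonneg fun i _ => by positivity
    have hip_def : ∀ x, ip x x = 0 → x = 0 := by
      intro x hx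
      have hre : (ip x x).re = 0 := by rw [hx]; rfl
      rw [hip_re] at hre
      have h0 : ∀ A ∈ F, (∑ i, ((b.repr (A x) i).re ^ 2 + (b.repr (A x) i).im ^ 2)) = 0 := by
        have := (Finset.sum_eq_zero_iff_of_nonneg
          (fun A _ => Finset.sum_nonneg fun i _ => by positivity)).mp hre
        exact this
      have h1 : ∀ i, ((b.repr x i).re ^ 2 + (b.repr x i).im ^ 2) = 0 := by
        have := (Finset.sum_eq_zero_iff_of_nonneg (fun i _ => by positivity)).mp (h0 1 h1F)
        intro i
        simpa using this i (Finset.mem_univ i)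
      have h2 : ∀ i, b.repr x i = 0 := by
        intro i
        have := h1 i
        have hre0 : (b.repr x i).re = 0 := by nlinarith [sq_nonneg (b.repr x i).re, sq_nonneg (b.repr x i).im]
        have him0 : (b.repr x i).im = 0 := by nlinarith [sq_nonneg (b.repr x i).re, sq_nonneg (b.repr x i).im]
        exact Complex.ext hre0 him0
      exact b.repr.injective (Finsupp.ext fun i => by simp [h2 i])
    have hip_add : ∀ x y z, ip (x + y) z = ip x z + ip y z := by
      intro x y z
      simp only [ip, map_add, Finsupp.add_apply, add_mul, Finset.sum_add_distrib]
    have hip_smul : ∀ (r : ℂ) x y, ip (r • x) y = (starRingEnd ℂ) r * ip x y := by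
      intro r x y
      simp only [ip, map_smul, Finsupp.smul_apply, smul_eq_mul, map_mul, Finset.mul_sum, mul_assoc]
    have hip_inv : ∀ (g : G) (x y : V), ip (ρ g x) (ρ g y) = ip x y := by
      intro g x y
      simp only [ip]
      refine Finset.sum_bij' (fun A _ => A * ρ g) (fun A _ => A * (ρ g)⁻¹) ?_ ?_ ?_ ?_ ?_
      · intro A hA
        obtain ⟨h, rfl⟩ := (hmemF A).1 hA
        exact (hmemF _).2 ⟨h * g, map_mul ρ h g⟩
      · intro A hA
        obtain ⟨h, rfl⟩ := (hmemF A).1 hA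
        exact (hmemF _).2 ⟨h * g⁻¹, by rw [map_mul, map_inv]⟩
      · intro A _; group
      · intro A _; group
      · intro A _; rfl
    -- install inner product structure
    let cc : InnerProductSpace.Core ℂ V :=
      { inner := ip
        conj_inner_symm := hip_conj
        re_inner_nonneg := hip_nonneg
        add_left := hip_add
        smul_left := fun x y r => hip_smul r x y
        definite := hip_def }
    letI : NormedAddCommGroup V := InnerProductSpace.Core.toNormedAddCommGroup (cd := cc)
    letI : InnerProductSpace ℂ V := InnerProductSpace.ofCore cc.toCore
    haveI : CompleteSpace V := FiniteDimensional.complete ℂ V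
    have hinner : ∀ x y : V, (inner ℂ x y : ℂ) = ip x y := fun x y => rfl
    have hinner_inv : ∀ (g : G) (x y : V), (inner ℂ (ρ g x) (ρ g y) : ℂ) = inner ℂ x y := by
      intro g x y; rw [hinner, hinner, hip_inv]
    -- the operator T with ⟪x, T y⟫ = B x y
    have hBlin : ∀ y : V, ∃ Ty : V, ∀ x, (inner ℂ x Ty : ℂ) = B x y := by
      intro y
      let f : V →ₗ[ℂ] ℂ :=
        { toFun := fun x => B y x
          map_add' := fun a c => haddl y a c
          map_smul' := fun c a => hsmul c y a }
      refine ⟨(InnerProductSpace.toDual ℂ V).symm (LinearMap.toContinuousLinearMap f),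
        fun x => ?_⟩
      have h1 : (inner ℂ ((InnerProductSpace.toDual ℂ V).symm
          (LinearMap.toContinuousLinearMap f)) x : ℂ) = B y x := by
        rw [InnerProductSpace.toDual_symm_apply]
        rfl
      rw [← inner_conj_symm, h1, ← hherm]
    choose T hT using hBlin
    have hTcomm : ∀ (g : G) (y : V), T (ρ g y) = ρ g (T y) := by
      intro g y
      refine ext_inner_left ℂ fun x => ?_
      rw [hT]
      have hxx : ρ g (ρ g⁻¹ x) = x := by
        have : (ρ g * ρ g⁻¹) x = x := by
          rw [← map_mul, mul_inv_cancel, map_one]; rfl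
        exact this
      calc B x (ρ g y) = B (ρ g (ρ g⁻¹ x)) (ρ g y) := by rw [hxx]
        _ = B (ρ g⁻¹ x) y := hinv g _ _
        _ = (inner ℂ (ρ g⁻¹ x) (T y) : ℂ) := (hT y _).symm
        _ = inner ℂ (ρ g (ρ g⁻¹ x)) (ρ g (T y)) := (hinner_inv g _ _).symm
        _ = inner ℂ x (ρ g (T y)) := by rw [hxx]
    let Tend : Module.End ℂ V :=
      { toFun := T
        map_add' := fun y z => ext_inner_left ℂ fun x => by
          rw [hT, inner_add_right, hT, hT, haddl]
        map_smul' := fun c y => ext_inner_left ℂ fun x => by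
          simp only [RingHom.id_apply]
          rw [hT, inner_smul_right, hT, hsmul] }
    obtain ⟨μ, hμ⟩ := Module.End.exists_eigenvalue Tend
    have hWinv : ∀ (g : G), ∀ x ∈ Tend.eigenspace μ, ρ g x ∈ Tend.eigenspace μ := by
      intro g x hx
      rw [Module.End.mem_eigenspace_iff] at hx ⊢
      show T (ρ g x) = μ • ρ g x
      rw [hTcomm]
      have : T x = μ • x := hx
      rw [this, map_smul]
    have hWtop : Tend.eigenspace μ = ⊤ := by
      rcases hirr _ hWinv with h | h
      · exact absurd h hμ
      · exact h
    have hTall : ∀ y : V, T y = μ • y := by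
      intro y
      have : y ∈ Tend.eigenspace μ := hWtop ▸ Submodule.mem_top
      exact Module.End.mem_eigenspace_iff.mp this
    have hBform : ∀ x y : V, B x y = μ * inner ℂ x y := by
      intro x y
      rw [← hT, hTall, inner_smul_right]
    have him : ∀ x : V, (ip x x).im = 0 := by
      intro x
      have := hip_conj x x
      exact (Complex.conj_eq_iff_im.mp this)
    have hre : ∀ x : V, (B x x).re = μ.re * (ip x x).re := by
      intro x
      rw [hBform, hinner]
      rw [Complex.mul_re, him, mul_zero, sub_zero]
    rw [hre] at hv hw
    have hv2 : 0 ≤ (ip v v).re := hip_nonneg v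
    have hw2 : 0 ≤ (ip w w).re := hip_nonneg w
    have hμpos : 0 < μ.re := by by_contra hcon; push_neg at hcon; nlinarith
    have hμneg : μ.re < 0 := by by_contra hcon; push_neg at hcon; nlinarith
    linarith
  refine ⟨key, ?_⟩
  by_contra h
  rw [not_infinite_iff_finite] at h
  exact key (Set.finite_range ρ)
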